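/- Let B be an index type and a : B → ℝ, b : B → ℝ ∪ {+∞} with a_i < b_i for all i, and suppose that for every ε > 0 and s ∈ ℝ the set N(ε, s) = {i ∈ B : a_i < s and b_i − a_i > ε} is finite. Then the count b_ε(s) = #N(ε, s) is right semi-continuous in ε and left semi-continuous in s: for every ε > 0 and s ∈ ℝ there exists δ > 0 such that N(ε', s') = N(ε, s) (and in particular b_{ε'}(s') = b_ε(s)) whenever ε ≤ ε' < ε + δ and s − δ < s' ≤ s. -/
import Mathlib


/-- If for every `ε > 0` and `s` the set
`N(ε, s) = {i | a i < s and b i − a i > ε}` of bars of length `> ε` beginning below `s`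
is finite, then the count `b_ε(s) = #N(ε, s)` is right semi-continuous in `ε` and left
semi-continuous in `s`: there is `δ > 0` with `N(ε', s') = N(ε, s)` (hence
`b_{ε'}(s') = b_ε(s)`) whenever `ε ≤ ε' < ε + δ` and `s − δ < s' ≤ s`. -/
theorem stmt_3 {B : Type*} (a : B → ℝ) (b : B → EReal)
    (hab : ∀ i, (a i : EReal) < b i)
    (hfin : ∀ ε > (0 : ℝ), ∀ s : ℝ,
      {i : B | a i < s ∧ (ε : EReal) < b i - (a i : EReal)}.Finite) :
    ∀ ε > (0 : ℝ), ∀ s : ℝ, ∃ δ > (0 : ℝ), ∀ ε' s' : ℝ,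
      ε ≤ ε' → ε' < ε + δ → s - δ < s' → s' ≤ s →
      ({i : B | a i < s' ∧ (ε' : EReal) < b i - (a i : EReal)}
        = {i : B | a i < s ∧ (ε : EReal) < b i - (a i : EReal)} ∧
      Nat.card ↥{i : B | a i < s' ∧ (ε' : EReal) < b i - (a i : EReal)}
        = Nat.card ↥{i : B | a i < s ∧ (ε : EReal) < b i - (a i : EReal)}) := by
  classical
  intro ε hε s
  have hN : {i : B | a i < s ∧ (ε : EReal) < b i - (a i : EReal)}.Finite := hfin ε hε s
  set g : B → ℝ := fun i =>
    if b i - (a i : EReal) = ⊤ then 1 else ((b i - (a i : EReal)).toReal - ε) / 2 with hg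
  set f : B → ℝ := fun i => min (s - a i) (g i) with hf
  set F : Finset ℝ := insert 1 (hN.toFinset.image f) with hF
  have hFne : F.Nonempty := ⟨1, by simp [hF]⟩
  set δ : ℝ := F.min' hFne with hδ
  -- key facts about members of N
  have hεlt : ∀ i, (ε : EReal) < b i - (a i : EReal) → b i - (a i : EReal) ≠ ⊤ →
      ε < (b i - (a i : EReal)).toReal := by
    intro i h1 h2
    have hbot : b i - (a i : EReal) ≠ ⊥ := by
      intro hb; rw [hb] at h1; exact (not_lt_bot h1).elim
    have := EReal.coe_toReal h2 hbot
    rw [← this] at h1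
    exact_mod_cast h1
  have hfpos : ∀ i ∈ hN.toFinset, 0 < f i := by
    intro i hi
    simp only [Set.Finite.mem_toFinset, Set.mem_setOf_eq] at hi
    obtain ⟨h1, h2⟩ := hi
    refine lt_min (by linarith) ?_
    by_cases htop : b i - (a i : EReal) = ⊤
    · simp [hg, htop]
    · have := hεlt i h2 htop
      simp only [hg, htop, if_false]
      linarith
  have hδpos : 0 < δ := by
    rw [hδ, Finset.lt_min'_iff]
    intro x hx
    simp only [hF, Finset.mem_insert, Finset.mem_image] at hx
    rcases hx with rfl | ⟨i, hi, rfl⟩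
    · norm_num
    · exact hfpos i hi
  refine ⟨δ, hδpos, ?_⟩
  intro ε' s' hεε' hε'δ hs's hs'
  have hδle : ∀ i, a i < s → (ε : EReal) < b i - (a i : EReal) → δ ≤ f i := by
    intro i h1 h2
    exact Finset.min'_le F (f i) (by
      simp only [hF, Finset.mem_insert, Finset.mem_image]
      exact Or.inr ⟨i, by simp [Set.Finite.mem_toFinset, Set.mem_setOf_eq, h1, h2], rfl⟩)
  have hset : {i : B | a i < s' ∧ (ε' : EReal) < b i - (a i : EReal)}
      = {i : B | a i < s ∧ (ε : EReal) < b i - (a i : EReal)} := by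
    ext i
    simp only [Set.mem_setOf_eq]
    constructor
    · rintro ⟨h1, h2⟩
      refine ⟨lt_of_lt_of_le h1 hs', lt_of_le_of_lt ?_ h2⟩
      exact_mod_cast hεε'
    · rintro ⟨h1, h2⟩
      have hδf := hδle i h1 h2
      have hδ1 : δ ≤ s - a i := le_trans hδf (min_le_left _ _)
      have hδ2 : δ ≤ g i := le_trans hδf (min_le_right _ _)
      refine ⟨by linarith, ?_⟩
      by_cases htop : b i - (a i : EReal) = ⊤
      · rw [htop]; exact EReal.coe_lt_top ε'
      · have hd := hεlt i h2 htop
        have hg2 : g i = ((b i - (a i : EReal)).toReal - ε) / 2 := by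
          simp [hg, htop]
        have hε'd : ε' < (b i - (a i : EReal)).toReal := by
          rw [hg2] at hδ2; linarith
        have hbot : b i - (a i : EReal) ≠ ⊥ := by
          intro hb; rw [hb] at h2; exact (not_lt_bot h2).elim
        rw [← EReal.coe_toReal htop hbot]
        exact_mod_cast hε'd
  exact ⟨hset, by rw [hset]⟩
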